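/- The optimal (m+1)-seed frequency of a string R of length L satisfies the recurrence Opt(R, m+1) = min over dividers i (with m ≤ i - 1 and i ≤ L) of Opt(R[0, i), m) + Opt(R[i, L), 1), where Opt(u, 1) is the minimum of f over all nonempty contiguous substrings of u. -/

import Mathlib

/-- A placement of seeds in a string `u`: a list of intervals `(a, b)` denoting positions
`[a, b)`, each nonempty, within bounds, pairwise disjoint and in order. -/
def ValidPlacement {α : Type*} (u : List α) (ivs : List (ℕ × ℕ)) : Prop :=
  (∀ p ∈ ivs, p.1 < p.2 ∧ p.2 ≤ u.length) ∧ ivs.Chain' (fun p q => p.2 ≤ q.1)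

/-- The total frequency (cost) of a placement: the sum of `f` over the substrings of `u`
cut out by the intervals. -/
def cost {α : Type*} (f : List α → ℕ) (u : List α) (ivs : List (ℕ × ℕ)) : ℕ :=
  (ivs.map fun p => f ((u.drop p.1).take (p.2 - p.1))).sum

/-- `Opt f u m`: the optimal (minimum) total cost over all placements of `m` seeds in `u`. -/
noncomputable def Opt {α : Type*} (f : List α → ℕ) (u : List α) (m : ℕ) : ℕ :=
  sInf {c | ∃ ivs, ivs.length = m ∧ ValidPlacement u ivs ∧ c = cost f u ivs}

/-- `Opt1 f u`: the minimum of `f` over all nonempty contiguous substrings of `u`. -/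
noncomputable def Opt1 {α : Type*} (f : List α → ℕ) (u : List α) : ℕ :=
  sInf {c | ∃ a b : ℕ, a < b ∧ b ≤ u.length ∧ c = f ((u.drop a).take (b - a))}

open List

/-- Index lower bound: the `k`-th interval of a valid chain starts at position `≥ k`. -/
lemma aux_get_fst_ge {ivs : List (ℕ × ℕ)} (hne : ∀ p ∈ ivs, p.1 < p.2)
    (hch : ivs.Chain' (fun p q => p.2 ≤ q.1)) :
    ∀ k (hk : k < ivs.length), k ≤ (ivs.get ⟨k, hk⟩).1 := by
  intro k
  induction k with
  | zero => intro hk; exact Nat.zero_le _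
  | succ k ih =>
    intro hk
    have hk' : k < ivs.length := by omega
    have h1 := ih hk'
    have h2 : (ivs.get ⟨k, by omega⟩).2 ≤ (ivs.get ⟨k + 1, by omega⟩).1 :=
      (isChain_iff_getElem.1 hch) k (by omega)
    have h3 := hne (ivs.get ⟨k, hk'⟩) (get_mem _ _)
    have e1 : ivs.get ⟨k, by omega⟩ = ivs.get ⟨k, hk'⟩ := rfl
    have e2 : ivs.get ⟨k + 1, by omega⟩ = ivs.get ⟨k + 1, hk⟩ := rfl
    rw [e1, e2] at h2
    omega

/-- Earlier intervals end before later ones start. -/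
lemma aux_snd_le_fst {ivs : List (ℕ × ℕ)} (hne : ∀ p ∈ ivs, p.1 < p.2)
    (hch : ivs.Chain' (fun p q => p.2 ≤ q.1)) :
    ∀ j k (hjk : j < k) (hk : k < ivs.length),
      (ivs.get ⟨j, by omega⟩).2 ≤ (ivs.get ⟨k, hk⟩).1 := by
  intro j k
  induction k with
  | zero => omega
  | succ k ih =>
    intro hjk hk
    have hk' : k < ivs.length := by omega
    have h2 : (ivs.get ⟨k, by omega⟩).2 ≤ (ivs.get ⟨k + 1, by omega⟩).1 :=
      (isChain_iff_getElem.1 hch) k (by omega)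
    have e2 : ivs.get ⟨k + 1, by omega⟩ = ivs.get ⟨k + 1, hk⟩ := rfl
    rw [e2] at h2
    rcases Nat.lt_or_ge j k with h | h
    · have h1 := ih h hk'
      have h3 := hne (ivs.get ⟨k, hk'⟩) (get_mem _ _)
      have e1 : ivs.get ⟨k, by omega⟩ = ivs.get ⟨k, hk'⟩ := rfl
      rw [e1] at h2
      omega
    · have : j = k := by omega
      subst this
      exact h2

/-- Some placement of `m` seeds always exists when `m ≤ |u|`. -/
lemma aux_exists_placement {α : Type*} (u : List α) (m : ℕ) (h : m ≤ u.length) :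
    ∃ ivs : List (ℕ × ℕ), ivs.length = m ∧ ValidPlacement u ivs := by
  refine ⟨(List.range m).map fun j => (j, j + 1), by simp, ?_, ?_⟩
  · intro p hp
    simp only [mem_map, mem_range] at hp
    obtain ⟨j, hj, rfl⟩ := hp
    exact ⟨Nat.lt_succ_self j, by omega⟩
  · show List.IsChain _ _; rw [isChain_map]
    exact ((List.pairwise_lt_range (n := m)).isChain).imp (fun {x y} hxy => by simpa using hxy)

/-- Transfer of cost from `u` to a prefix of `u` when all intervals fit in the prefix. -/
lemma aux_cost_take {α : Type*} (f : List α → ℕ) (u : List α) (i : ℕ) (ivs : List (ℕ × ℕ))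
    (h : ∀ p ∈ ivs, p.2 ≤ i) : cost f (u.take i) ivs = cost f u ivs := by
  unfold cost
  congr 1
  apply List.map_congr_left
  intro p hp
  rw [List.drop_take, List.take_take, inf_eq_left.2 (by have := h p hp; omega)]

theorem opt_divider_recurrence {α : Type*} (f : List α → ℕ) (R : List α) (m : ℕ)
    (hm : 1 ≤ m) (hL : m + 1 ≤ R.length) :
    Opt f R (m + 1) =
      sInf {c | ∃ i, m ≤ i ∧ i < R.length ∧
        c = Opt f (R.take i) m + Opt1 f (R.drop i)} := by
  apply _root_.le_antisymm
  · -- Opt ≤ sInf S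
    apply le_csInf
    · exact ⟨_, m, le_refl m, by omega, rfl⟩
    rintro c ⟨i, him, hiL, rfl⟩
    -- realize Opt f (R.take i) m
    have h1 : {c | ∃ ivs, ivs.length = m ∧ ValidPlacement (R.take i) ivs ∧
        c = cost f (R.take i) ivs}.Nonempty := by
      obtain ⟨ivs, h1, h2⟩ := aux_exists_placement (R.take i) m
        (by rw [length_take]; omega)
      exact ⟨_, ivs, h1, h2, rfl⟩
    obtain ⟨ivs, hlen, hvp, hc⟩ := Nat.sInf_mem h1
    -- realize Opt1 f (R.drop i)
    have h2 : {c | ∃ a b : ℕ, a < b ∧ b ≤ (R.drop i).length ∧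
        c = f (((R.drop i).drop a).take (b - a))}.Nonempty :=
      ⟨_, 0, 1, Nat.one_pos, by rw [length_drop]; omega, rfl⟩
    obtain ⟨a, b, hab, hb, hc2⟩ := Nat.sInf_mem h2
    rw [length_drop] at hb
    apply Nat.sInf_le
    refine ⟨ivs ++ [(i + a, i + b)], by simp [hlen], ⟨?_, ?_⟩, ?_⟩
    · intro p hp
      rcases mem_append.1 hp with hp | hp
      · obtain ⟨hp1, hp2⟩ := hvp.1 p hp
        rw [length_take] at hp2
        exact ⟨hp1, by omega⟩
      · simp only [mem_singleton] at hp
        subst hp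
        exact ⟨by omega, by omega⟩
    · refine isChain_append.2 ⟨hvp.2, isChain_singleton _, ?_⟩
      intro x hx y hy
      simp only [head?_cons, Option.mem_def, Option.some.injEq] at hy
      subst hy
      have hxm : x ∈ ivs := List.mem_of_mem_getLast? hx
      have := (hvp.1 x hxm).2
      rw [length_take] at this
      show x.2 ≤ i + a
      omega
    · have hsplit : cost f R (ivs ++ [(i + a, i + b)]) =
          cost f R ivs + f ((R.drop (i + a)).take ((i + b) - (i + a))) := by
        unfold cost; simp
      rw [hsplit]
      have hcc : cost f R ivs = cost f (R.take i) ivs := by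
        rw [aux_cost_take]
        intro p hp
        have := (hvp.1 p hp).2
        rw [length_take] at this
        omega
      have hdd : (R.drop (i + a)).take ((i + b) - (i + a)) =
          ((R.drop i).drop a).take (b - a) := by
        rw [List.drop_drop]
        congr 1
        omega
      rw [hcc, hdd, ← hc, ← hc2]
      rfl
  · -- sInf S ≤ Opt
    have h0 : {c | ∃ ivs : List (ℕ × ℕ), ivs.length = m + 1 ∧ ValidPlacement R ivs ∧
        c = cost f R ivs}.Nonempty := by
      obtain ⟨ivs, h1, h2⟩ := aux_exists_placement R (m + 1) hL
      exact ⟨_, ivs, h1, h2, rfl⟩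
    obtain ⟨ivs, hlen, hvp, hc⟩ := Nat.sInf_mem h0
    have hnil : ivs ≠ [] := by intro h; rw [h] at hlen; simp at hlen
    obtain ⟨ivs', p, hdec⟩ : ∃ ivs' p, ivs = ivs' ++ [p] :=
      ⟨ivs.dropLast, ivs.getLast hnil, (List.dropLast_append_getLast hnil).symm⟩
    obtain ⟨a, b⟩ := p
    subst hdec
    rw [length_append, length_singleton] at hlen
    have hlen' : ivs'.length = m := by omega
    have hab : a < b ∧ b ≤ R.length := hvp.1 (a, b) (by simp)
    -- m ≤ a
    have hma : m ≤ a := by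
      have hk : ivs'.length < (ivs' ++ [(a, b)]).length := by
        simp
      have := aux_get_fst_ge (fun p hp => (hvp.1 p hp).1) hvp.2 ivs'.length hk
      rw [get_eq_getElem, List.getElem_append_right (le_refl _)] at this
      simp only [Nat.sub_self, List.getElem_cons_zero] at this
      omega
    -- every interval of ivs' ends by position a
    have hend : ∀ q ∈ ivs', q.2 ≤ a := by
      intro q hq
      obtain ⟨j, hj, rfl⟩ := List.mem_iff_getElem.1 hq
      have hjlt : j < (ivs' ++ [(a, b)]).length := by simp; omega
      have hk : ivs'.length < (ivs' ++ [(a, b)]).length := by simp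
      have h1 := aux_snd_le_fst (fun p hp => (hvp.1 p hp).1) hvp.2 j ivs'.length (by omega) hk
      rw [get_eq_getElem, get_eq_getElem, List.getElem_append_left hj,
        List.getElem_append_right (le_refl _)] at h1
      simpa using h1
    -- membership of the candidate divider value
    have hmem : Opt f (R.take a) m + Opt1 f (R.drop a) ∈
        {c | ∃ i, m ≤ i ∧ i < R.length ∧
          c = Opt f (R.take i) m + Opt1 f (R.drop i)} :=
      ⟨a, hma, by omega, rfl⟩
    refine le_trans (Nat.sInf_le hmem) ?_
    have hc' : Opt f R (m + 1) = cost f R (ivs' ++ [(a, b)]) := hc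
    rw [hc']
    have hsplit : cost f R (ivs' ++ [(a, b)]) =
        cost f R ivs' + f ((R.drop a).take (b - a)) := by
      unfold cost; simp
    rw [hsplit]
    have h1 : Opt f (R.take a) m ≤ cost f R ivs' := by
      apply Nat.sInf_le
      refine ⟨ivs', hlen', ⟨?_, (isChain_append.1 hvp.2).1⟩, ?_⟩
      · intro q hq
        obtain ⟨hq1, hq2⟩ := hvp.1 q (mem_append.2 (Or.inl hq))
        refine ⟨hq1, ?_⟩
        rw [length_take]
        have := hend q hq
        omega
      · rw [aux_cost_take f R a ivs' hend]
    have h2 : Opt1 f (R.drop a) ≤ f ((R.drop a).take (b - a)) := by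
      apply Nat.sInf_le
      refine ⟨0, b - a, by omega, by rw [length_drop]; omega, by simp⟩
    omega
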